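/- Let R > 0, c > 0 and set Θ(τ) := θ(τ/R) where θ(τ) = Σ_{n=0}^∞ c τⁿ/(n+1)³. Then there exists B > 0 such that for every ℓ ∈ ℕ, Θ(τ) ≪ (B^ℓ/ℓ!) Θ^{(ℓ)}(τ) as formal power series (coefficientwise inequality), where Θ^{(ℓ)} denotes the ℓ-th formal derivative. -/

import Mathlib

open PowerSeries

lemma iter_deriv_mk (f : ℕ → ℝ) (ℓ : ℕ) :
    derivativeFun^[ℓ] (PowerSeries.mk f) =
      PowerSeries.mk (fun m => ((m + ℓ).descFactorial ℓ : ℝ) * f (m + ℓ)) := by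
  induction ℓ generalizing f with
  | zero => simp
  | succ ℓ ih =>
    rw [Function.iterate_succ_apply]
    have h1 : derivativeFun (PowerSeries.mk f)
        = PowerSeries.mk (fun m => ((m : ℝ) + 1) * f (m + 1)) := by
      ext n
      rw [show (PowerSeries.mk f).derivativeFun = derivative ℝ (PowerSeries.mk f) from rfl,
        coeff_derivativeFun, coeff_mk, coeff_mk]
      push_cast
      ring
    rw [h1, ih]
    ext m
    rw [coeff_mk, coeff_mk]
    show ((m + ℓ).descFactorial ℓ : ℝ) * (((((m + ℓ : ℕ) : ℝ)) + 1) * f (m + ℓ + 1))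
        = (((m + ℓ + 1).descFactorial (ℓ + 1) : ℝ)) * f (m + ℓ + 1)
    rw [Nat.succ_descFactorial_succ]
    push_cast
    ring

theorem stmt_10 (R c : ℝ) (hR : 0 < R) (hc : 0 < c) :
    ∃ B > (0:ℝ), ∀ ℓ n : ℕ,
      (coeff n) (PowerSeries.mk (fun m : ℕ => c / (R ^ m * (m + 1) ^ 3)))
        ≤ B ^ ℓ / (Nat.factorial ℓ) *
          (coeff n) (derivativeFun^[ℓ]
            (PowerSeries.mk (fun m : ℕ => c / (R ^ m * (m + 1) ^ 3)))) := by
  refine ⟨8 * max R 1, by positivity, ?_⟩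
  intro ℓ n
  rw [iter_deriv_mk, coeff_mk, coeff_mk]
  push_cast
  set B : ℝ := 8 * max R 1 with hBdef
  have hRle : R ≤ max R 1 := le_max_left _ _
  have hmaxpos : (0:ℝ) < max R 1 := lt_of_lt_of_le one_pos (le_max_right _ _)
  have hF : (0:ℝ) < (ℓ.factorial : ℝ) := by positivity
  set D : ℝ := ((n + ℓ).descFactorial ℓ : ℝ) with hDdef
  have hdesc : (ℓ.factorial : ℝ) ≤ D := by
    rw [hDdef]
    exact_mod_cast Nat.descFactorial_self ℓ ▸
      Nat.descFactorial_le ℓ (Nat.le_add_left ℓ n)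
  set X : ℝ := R ^ (n + ℓ) * ((n : ℝ) + (ℓ : ℝ) + 1) ^ 3 with hXdef
  have hX : (0:ℝ) < X := by positivity
  have hY : (0:ℝ) < R ^ n * ((n : ℝ) + 1) ^ 3 := by positivity
  -- key: R^ℓ * (ℓ+1)^3 ≤ B^ℓ
  have hkey : R ^ ℓ * ((ℓ : ℝ) + 1) ^ 3 ≤ B ^ ℓ := by
    have h1 : ((ℓ : ℝ) + 1) ≤ (2 : ℝ) ^ ℓ := by
      exact_mod_cast Nat.succ_le_of_lt (Nat.lt_two_pow_self (n := ℓ))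
    have h2 : ((ℓ : ℝ) + 1) ^ 3 ≤ (8 : ℝ) ^ ℓ := by
      calc ((ℓ : ℝ) + 1) ^ 3 ≤ ((2:ℝ) ^ ℓ) ^ 3 :=
            pow_le_pow_left₀ (by positivity) h1 3
        _ = (8 : ℝ) ^ ℓ := by
            rw [← pow_mul, mul_comm, pow_mul]; norm_num
    have h3 : R ^ ℓ ≤ (max R 1) ^ ℓ := pow_le_pow_left₀ hR.le hRle ℓ
    calc R ^ ℓ * ((ℓ : ℝ) + 1) ^ 3 ≤ (max R 1) ^ ℓ * (8:ℝ) ^ ℓ :=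
          mul_le_mul h3 h2 (by positivity) (by positivity)
      _ = B ^ ℓ := by rw [hBdef, mul_pow]; ring
  have h2 : ((n : ℝ) + (ℓ : ℝ) + 1) ^ 3 ≤ ((ℓ : ℝ) + 1) ^ 3 * ((n : ℝ) + 1) ^ 3 := by
    have hn : (0:ℝ) ≤ (n : ℝ) := Nat.cast_nonneg n
    have hl : (0:ℝ) ≤ (ℓ : ℝ) := Nat.cast_nonneg ℓ
    have hle : (n : ℝ) + (ℓ : ℝ) + 1 ≤ ((ℓ : ℝ) + 1) * ((n : ℝ) + 1) := by nlinarith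
    calc ((n : ℝ) + (ℓ : ℝ) + 1) ^ 3 ≤ (((ℓ : ℝ) + 1) * ((n : ℝ) + 1)) ^ 3 :=
          pow_le_pow_left₀ (by positivity) hle 3
      _ = ((ℓ : ℝ) + 1) ^ 3 * ((n : ℝ) + 1) ^ 3 := mul_pow _ _ _
  have h3 : R ^ ℓ * ((n : ℝ) + (ℓ : ℝ) + 1) ^ 3 ≤ B ^ ℓ * ((n : ℝ) + 1) ^ 3 := by
    calc R ^ ℓ * ((n : ℝ) + (ℓ : ℝ) + 1) ^ 3
        ≤ R ^ ℓ * (((ℓ : ℝ) + 1) ^ 3 * ((n : ℝ) + 1) ^ 3) :=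
          mul_le_mul_of_nonneg_left h2 (by positivity)
      _ = (R ^ ℓ * ((ℓ : ℝ) + 1) ^ 3) * ((n : ℝ) + 1) ^ 3 := by ring
      _ ≤ B ^ ℓ * ((n : ℝ) + 1) ^ 3 :=
          mul_le_mul_of_nonneg_right hkey (by positivity)
  have hBpos : (0:ℝ) < B := by positivity
  calc c / (R ^ n * ((n : ℝ) + 1) ^ 3)
      ≤ B ^ ℓ * (c / X) := by
        rw [show B ^ ℓ * (c / X) = B ^ ℓ * c / X from (mul_div_assoc _ _ _).symm,
          div_le_div_iff₀ hY hX]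
        have hpow : R ^ (n + ℓ) = R ^ n * R ^ ℓ := pow_add R n ℓ
        rw [hXdef, hpow]
        nlinarith [mul_le_mul_of_nonneg_left h3
          (by positivity : (0:ℝ) ≤ c * R ^ n)]
    _ = B ^ ℓ * (c / X) * 1 := (mul_one _).symm
    _ ≤ B ^ ℓ * (c / X) * (D / (ℓ.factorial : ℝ)) := by
        have h4 : (1:ℝ) ≤ D / (ℓ.factorial : ℝ) := (one_le_div hF).2 hdesc
        exact mul_le_mul_of_nonneg_left h4 (by positivity)
    _ = B ^ ℓ / (ℓ.factorial : ℝ) * (D * (c / X)) := by ring
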